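/- A graph G is (K4, claw, diamond)-free if and only if G is the line graph of some triangle-free graph with maximum degree at most 3. -/

import Mathlib

/-- The claw `K_{1,3}`. -/
def claw : SimpleGraph (Fin 1 ⊕ Fin 3) := completeBipartiteGraph (Fin 1) (Fin 3)

/-- The diamond, i.e. `K₄` minus one edge (the edge between `2` and `3`). -/
def diamond : SimpleGraph (Fin 4) :=
  SimpleGraph.fromEdgeSet {s(0, 1), s(0, 2), s(1, 2), s(0, 3), s(1, 3)}

namespace Stmt9
open SimpleGraph
variable {V : Type*} {G : SimpleGraph V}

lemma clawF (h : IsEmpty (claw ↪g G)) {v a b c : V} (hva : G.Adj v a) (hvb : G.Adj v b)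
    (hvc : G.Adj v c) (hab : ¬G.Adj a b) (hac : ¬G.Adj a c) (hbc : ¬G.Adj b c)
    (nab : a ≠ b) (nac : a ≠ c) (nbc : b ≠ c) : False := by
  apply h.false
  refine ⟨⟨Sum.elim (fun _ => v) ![a, b, c], ?_⟩, ?_⟩
  · rintro (x | x) (y | y) hxy <;> simp_all <;>
      fin_cases x <;> (try fin_cases y) <;> simp_all <;>
      first
        | exact absurd hxy.symm hva.ne | exact absurd hxy.symm hvb.ne
        | exact absurd hxy.symm hvc.ne
        | exact absurd hxy hva.ne | exact absurd hxy hvb.ne | exact absurd hxy hvc.ne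
        | exact absurd hxy nab | exact absurd hxy nac | exact absurd hxy nbc
        | exact absurd hxy.symm nab | exact absurd hxy.symm nac | exact absurd hxy.symm nbc
        | rfl
  · rintro (x | x) (y | y) <;>
      fin_cases x <;> fin_cases y <;>
      simp_all [claw, completeBipartiteGraph] <;>
      first
        | exact hva | exact hvb | exact hvc | exact hva.symm | exact hvb.symm | exact hvc.symm
        | exact G.irrefl | exact hab | exact hac | exact hbc
        | exact fun h' => hab h'.symm | exact fun h' => hac h'.symm | exact fun h' => hbc h'.symm

lemma diamondF (h : IsEmpty (diamond ↪g G)) {v a b c : V} (hva : G.Adj v a) (hvb : G.Adj v b)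
    (hvc : G.Adj v c) (hab : G.Adj a b) (hac : G.Adj a c) (hbc : ¬G.Adj b c)
    (nbc : b ≠ c) : False := by
  apply h.false
  have inj : Function.Injective ![v, a, b, c] := by
    intro x y hxy
    fin_cases x <;> fin_cases y <;> simp_all <;>
      first
        | exact absurd hxy hva.ne | exact absurd hxy hvb.ne | exact absurd hxy hvc.ne
        | exact absurd hxy hab.ne | exact absurd hxy hac.ne | exact absurd hxy nbc
        | exact absurd hxy.symm hva.ne | exact absurd hxy.symm hvb.ne
        | exact absurd hxy.symm hvc.ne | exact absurd hxy.symm hab.ne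
        | exact absurd hxy.symm hac.ne | exact absurd hxy.symm nbc
        | rfl
  refine ⟨⟨![v, a, b, c], inj⟩, ?_⟩
  intro x y
  fin_cases x <;> fin_cases y <;>
    simp_all [diamond, Sym2.eq, Sym2.rel_iff', Fin.ext_iff] <;>
    first
      | exact hva | exact hvb | exact hvc | exact hva.symm | exact hvb.symm | exact hvc.symm
      | exact G.irrefl | exact hab | exact hac | exact hbc | exact hab.symm | exact hac.symm
      | exact fun h' => hbc h'.symm
      | exact iff_of_true (by first
          | exact hva | exact hvb | exact hvc | exact hab | exact hac
          | exact hva.symm | exact hvb.symm | exact hvc.symm | exact hab.symm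
          | exact hac.symm) (by decide)
      | exact iff_of_false (by first
          | exact hbc | exact fun h' => hbc h'.symm | exact G.irrefl) (by decide)
      | decide
      | exact fun h' => absurd h' (by decide)

lemma k4F (h : G.CliqueFree 4) {a b c d : V} (hab : G.Adj a b) (hac : G.Adj a c)
    (had : G.Adj a d) (hbc : G.Adj b c) (hbd : G.Adj b d) (hcd : G.Adj c d) : False := by
  classical
  refine h {a, b, c, d} ⟨?_, ?_⟩
  · intro x hx y hy hxy
    simp only [Finset.coe_insert, Set.mem_insert_iff, Finset.coe_singleton,
      Set.mem_singleton_iff] at hx hy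
    rcases hx with rfl | rfl | rfl | rfl <;> rcases hy with rfl | rfl | rfl | rfl <;>
      first
        | exact absurd rfl hxy
        | assumption
        | exact hab.symm | exact hac.symm | exact had.symm | exact hbc.symm
        | exact hbd.symm | exact hcd.symm
  · rw [Finset.card_insert_of_notMem, Finset.card_insert_of_notMem,
      Finset.card_insert_of_notMem, Finset.card_singleton] <;>
      simp [hab.ne, hac.ne, had.ne, hbc.ne, hbd.ne, hcd.ne]

lemma relSymm {a b : V} (h : a = b ∨ G.Adj a b) : b = a ∨ G.Adj b a :=
  h.imp Eq.symm Adj.symm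

/-- transitivity of `= ∨ Adj` inside a neighborhood -/
lemma transN (hd : IsEmpty (diamond ↪g G)) {v a b c : V} (ha : G.Adj v a) (hb : G.Adj v b)
    (hc : G.Adj v c) (hab : a = b ∨ G.Adj a b) (hbc : b = c ∨ G.Adj b c) :
    a = c ∨ G.Adj a c := by
  rcases hab with rfl | hab
  · exact hbc
  rcases hbc with rfl | hbc
  · exact Or.inr hab
  by_contra hac
  push_neg at hac
  exact diamondF hd hb.symm hab.symm hbc ha hc hac.2 hac.1

/-- every edge has at most one common neighbor -/
lemma uniqT (h4 : G.CliqueFree 4) (hd : IsEmpty (diamond ↪g G)) {u v w x : V}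
    (huv : G.Adj u v) (huw : G.Adj u w) (hvw : G.Adj v w) (hux : G.Adj u x)
    (hvx : G.Adj v x) : w = x := by
  by_contra hwx
  by_cases h : G.Adj w x
  · exact k4F h4 huv huw hux hvw hvx h
  · exact diamondF hd huv huw hux hvw hvx h hwx

def MC (G : SimpleGraph V) (s : Set V) : Prop := Maximal G.IsClique s

lemma mc_eq_of_rel (hd : IsEmpty (diamond ↪g G)) {s r : Set V} (hs : MC G s) (hr : MC G r)
    {v a c : V} (hvs : v ∈ s) (hvr : v ∈ r) (has : a ∈ s) (hav : a ≠ v) (hcr : c ∈ r)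
    (hcv : c ≠ v) (hrel : a = c ∨ G.Adj a c) : r = s := by
  have hadjs : ∀ x ∈ s, x ≠ v → G.Adj v x := fun x hx hxv => hs.1 hvs hx (Ne.symm hxv)
  have hadjr : ∀ x ∈ r, x ≠ v → G.Adj v x := fun x hx hxv => hr.1 hvr hx (Ne.symm hxv)
  have hcl : G.IsClique (s ∪ r) := by
    intro x hx y hy hxy
    rcases hx with hx | hx <;> rcases hy with hy | hy
    · exact hs.1 hx hy hxy
    · by_cases hxv : x = v
      · subst hxv; exact hadjr y hy (Ne.symm hxy)
      by_cases hyv : y = v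
      · subst hyv; exact (hadjs x hx hxv).symm
      · -- x ∈ s \ {v}, y ∈ r \ {v}
        have h1 : x = a ∨ G.Adj x a := by
          by_cases hxa : x = a
          · exact Or.inl hxa
          · exact Or.inr (hs.1 hx has hxa)
        have h2 : c = y ∨ G.Adj c y := by
          by_cases hcy : c = y
          · exact Or.inl hcy
          · exact Or.inr (hr.1 hcr hy hcy)
        have h3 := transN hd (hadjs x hx hxv) (hadjs a has hav) (hadjr c hcr hcv) h1 hrel
        have h4 := transN hd (hadjs x hx hxv) (hadjr c hcr hcv) (hadjr y hy hyv) h3 h2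
        exact h4.resolve_left hxy
    · by_cases hxv : x = v
      · subst hxv; exact hadjs y hy (Ne.symm hxy)
      by_cases hyv : y = v
      · subst hyv; exact (hadjr x hx hxv).symm
      · have h1 : y = a ∨ G.Adj y a := by
          by_cases hya : y = a
          · exact Or.inl hya
          · exact Or.inr (hs.1 hy has hya)
        have h2 : c = x ∨ G.Adj c x := by
          by_cases hcx : c = x
          · exact Or.inl hcx
          · exact Or.inr (hr.1 hcr hx hcx)
        have h3 := transN hd (hadjr x hx hxv) (hadjr c hcr hcv) (hadjs a has hav)
          (relSymm h2) (relSymm hrel)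
        have h4 := transN hd (hadjr x hx hxv) (hadjs a has hav) (hadjs y hy hyv) h3
          (relSymm h1)
        exact h4.resolve_left hxy
    · exact hr.1 hx hy hxy
  have h1 : s ∪ r ⊆ s := hs.2 hcl Set.subset_union_left
  have h2 : s ∪ r ⊆ r := hr.2 hcl Set.subset_union_right
  exact Set.Subset.antisymm (fun x hx => h1 (Or.inr hx)) (fun x hx => h2 (Or.inl hx))

lemma mc_second (hs : MC G s) (ht : MC G t) (hvs : v ∈ s) (hvt : v ∈ t) (hst : s ≠ t) :
    ∃ a ∈ s, a ≠ v := by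
  by_contra h
  push_neg at h
  have hsv : s = {v} := Set.Subset.antisymm (fun x hx => h x hx) (by simp [hvs])
  have : t ⊆ s := hs.2 ht.1 (by rw [hsv]; simpa using hvt)
  exact hst (Set.Subset.antisymm (by rw [hsv]; simpa using hvt) this)

/-- a vertex lies in at most two maximal cliques -/
lemma mc_two (h4 : G.CliqueFree 4) (hcl : IsEmpty (claw ↪g G)) (hd : IsEmpty (diamond ↪g G))
    {s t r : Set V} (hs : MC G s) (ht : MC G t) (hr : MC G r) {v : V}
    (hvs : v ∈ s) (hvt : v ∈ t) (hvr : v ∈ r) (hst : s ≠ t) (hsr : s ≠ r) (htr : t ≠ r) :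
    False := by
  obtain ⟨a, has, hav⟩ := mc_second hs ht hvs hvt hst
  obtain ⟨b, hbt, hbv⟩ := mc_second ht hs hvt hvs hst.symm
  obtain ⟨c, hcr, hcv⟩ := mc_second hr hs hvr hvs hsr.symm
  have hab : ¬(a = b ∨ G.Adj a b) := fun h => hst.symm (mc_eq_of_rel hd hs ht hvs hvt has hav hbt hbv h)
  have hac : ¬(a = c ∨ G.Adj a c) := fun h => hsr.symm (mc_eq_of_rel hd hs hr hvs hvr has hav hcr hcv h)
  have hbc : ¬(b = c ∨ G.Adj b c) := fun h => htr.symm (mc_eq_of_rel hd ht hr hvt hvr hbt hbv hcr hcv h)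
  push_neg at hab hac hbc
  exact clawF hcl (hs.1 hvs has (Ne.symm hav)) (ht.1 hvt hbt (Ne.symm hbv))
    (hr.1 hvr hcr (Ne.symm hcv)) hab.2 hac.2 hbc.2 hab.1 hac.1 hbc.1

lemma exists_mc [Fintype V] {s₀ : Set V} (h : G.IsClique s₀) : ∃ s, s₀ ⊆ s ∧ MC G s :=
  Finite.exists_le_maximal h

lemma mc_unique_edge (hd : IsEmpty (diamond ↪g G)) {s t : Set V} (hs : MC G s) (ht : MC G t)
    {u v : V} (hus : u ∈ s) (hvs : v ∈ s) (hut : u ∈ t) (hvt : v ∈ t) (huv : u ≠ v) :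
    t = s :=
  mc_eq_of_rel hd hs ht hus hut hvs (Ne.symm huv) hvt (Ne.symm huv) (Or.inl rfl)

lemma mc_card (h4 : G.CliqueFree 4) {s : Set V} (hfin : s.Finite) (hs : MC G s) :
    s.ncard ≤ 3 := by
  by_contra h
  push_neg at h
  have h1 : 0 < s.ncard := by omega
  obtain ⟨a, ha⟩ := (Set.ncard_pos hfin).mp h1
  have h2 : 0 < (s \ {a}).ncard := by
    rw [Set.ncard_diff_singleton_of_mem ha]; omega
  obtain ⟨b, hb⟩ := (Set.ncard_pos hfin.diff).mp h2
  have h3 : 0 < ((s \ {a}) \ {b}).ncard := by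
    rw [Set.ncard_diff_singleton_of_mem hb,
      Set.ncard_diff_singleton_of_mem ha]; omega
  obtain ⟨c, hc⟩ := (Set.ncard_pos hfin.diff.diff).mp h3
  have h4' : 0 < (((s \ {a}) \ {b}) \ {c}).ncard := by
    rw [Set.ncard_diff_singleton_of_mem hc,
      Set.ncard_diff_singleton_of_mem hb,
      Set.ncard_diff_singleton_of_mem ha]; omega
  obtain ⟨d, hdm⟩ := (Set.ncard_pos hfin.diff.diff.diff).mp h4'
  simp only [Set.mem_diff, Set.mem_singleton_iff] at hb hc hdm
  obtain ⟨hbs, hba⟩ := hb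
  obtain ⟨⟨hcs, hca⟩, hcb⟩ := hc
  obtain ⟨⟨⟨hds, hda⟩, hdb⟩, hdc⟩ := hdm
  exact k4F h4 (hs.1 ha hbs (Ne.symm hba)) (hs.1 ha hcs (Ne.symm hca))
    (hs.1 ha hds (Ne.symm hda)) (hs.1 hbs hcs (Ne.symm hcb))
    (hs.1 hbs hds (Ne.symm hdb)) (hs.1 hcs hds (Ne.symm hdc))

/-- transport line graphs along isos -/
noncomputable def lineGraphIso {α β : Type*} {A : SimpleGraph α} {B : SimpleGraph β}
    (ψ : A ≃g B) : A.lineGraph ≃g B.lineGraph where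
  toEquiv := ψ.mapEdgeSet
  map_rel_iff' := by
    intro e₁ e₂
    simp only [lineGraph_adj_iff_exists, Iso.mapEdgeSet, Hom.mapEdgeSet, RelIso.coe_fn_toEquiv,
      Equiv.coe_fn_mk, ne_eq, Subtype.mk.injEq]
    constructor
    · rintro ⟨hne, w, hw1, hw2⟩
      obtain ⟨a, ha1, rfl⟩ := Sym2.mem_map.mp hw1
      obtain ⟨a', ha2, ha3⟩ := Sym2.mem_map.mp hw2
      rcases ψ.injective ha3 with rfl
      exact ⟨fun h => hne (by rw [h]), _, ha1, ha2⟩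
    · rintro ⟨hne, w, hw1, hw2⟩
      refine ⟨fun h => hne (Subtype.ext (Sym2.map.injective ψ.injective h)), ψ w,
        Sym2.mem_map.mpr ⟨w, hw1, rfl⟩, Sym2.mem_map.mpr ⟨w, hw2, rfl⟩⟩

lemma sym2_eq {x y : V} {z : Sym2 V} (h : x ≠ y) (h1 : x ∈ z) (h2 : y ∈ z) : z = s(x, y) :=
  (Sym2.eq_of_ne_mem h h1 h2 (Sym2.mem_mk_left x y) (Sym2.mem_mk_right x y))

lemma triF {W : Type*} {H : SimpleGraph W} (h3 : H.CliqueFree 3) {a b c : W}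
    (hab : H.Adj a b) (hac : H.Adj a c) (hbc : H.Adj b c) : False := by
  classical
  refine h3 {a, b, c} ⟨?_, ?_⟩
  · intro x hx y hy hxy
    simp only [Finset.coe_insert, Set.mem_insert_iff, Finset.coe_singleton,
      Set.mem_singleton_iff] at hx hy
    rcases hx with rfl | rfl | rfl <;> rcases hy with rfl | rfl | rfl <;>
      first
        | exact absurd rfl hxy
        | assumption
        | exact hab.symm | exact hac.symm | exact hbc.symm
  · rw [Finset.card_insert_of_notMem, Finset.card_insert_of_notMem, Finset.card_singleton] <;>
      simp [hab.ne, hac.ne, hbc.ne]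

/-- three pairwise adjacent edges in the line graph of a triangle-free graph share a vertex -/
lemma lineTri {W : Type*} {H : SimpleGraph W} (h3 : H.CliqueFree 3) {e f g : H.edgeSet}
    (hef : H.lineGraph.Adj e f) (heg : H.lineGraph.Adj e g) (hfg : H.lineGraph.Adj f g) :
    ∃ v : W, v ∈ (e : Sym2 W) ∧ v ∈ (f : Sym2 W) ∧ v ∈ (g : Sym2 W) := by
  obtain ⟨hef_ne, v, hve, hvf⟩ := lineGraph_adj_iff_exists.mp hef
  obtain ⟨heg_ne, u, hue, hug⟩ := lineGraph_adj_iff_exists.mp heg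
  obtain ⟨hfg_ne, w, hwf, hwg⟩ := lineGraph_adj_iff_exists.mp hfg
  obtain ⟨a, hea⟩ := Sym2.mem_iff_exists.mp hve
  obtain ⟨b, hfb⟩ := Sym2.mem_iff_exists.mp hvf
  rw [hea, Sym2.mem_iff] at hue
  rw [hfb, Sym2.mem_iff] at hwf
  rcases hue with rfl | rfl
  · exact ⟨u, hve, hvf, hug⟩
  rcases hwf with rfl | rfl
  · exact ⟨w, hve, hvf, hwg⟩
  -- now u ∈ g, w ∈ g, e = s(v,u), f = s(v,w)
  have hab : u ≠ w := by
    rintro rfl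
    exact hef_ne (Subtype.ext (by rw [hea, hfb]))
  have hg : (g : Sym2 W) = s(u, w) := sym2_eq hab hug hwg
  have adj_vu : H.Adj v u := by have := e.2; rwa [hea, mem_edgeSet] at this
  have adj_vw : H.Adj v w := by have := f.2; rwa [hfb, mem_edgeSet] at this
  have adj_uw : H.Adj u w := by have := g.2; rwa [hg, mem_edgeSet] at this
  exact (triF h3 adj_vu adj_vw adj_uw).elim

/-- four pairwise adjacent vertices in such a line graph are impossible -/
lemma lineK4 {W : Type*} [Fintype W] {H : SimpleGraph W} (h3 : H.CliqueFree 3)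
    (hdeg : ∀ w : W, (H.neighborSet w).ncard ≤ 3) {e₁ e₂ e₃ e₄ : H.edgeSet}
    (h12 : H.lineGraph.Adj e₁ e₂) (h13 : H.lineGraph.Adj e₁ e₃) (h14 : H.lineGraph.Adj e₁ e₄)
    (h23 : H.lineGraph.Adj e₂ e₃) (h24 : H.lineGraph.Adj e₂ e₄)
    (h34 : H.lineGraph.Adj e₃ e₄) : False := by
  obtain ⟨v, hv1, hv2, hv3⟩ := lineTri h3 h12 h13 h23
  obtain ⟨u, hu1, hu2, hu4⟩ := lineTri h3 h12 h14 h24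
  have huv : u = v := by
    by_contra hne
    exact h12.ne (Subtype.ext ((sym2_eq hne hu1 hv1).trans (sym2_eq hne hu2 hv2).symm))
  subst huv
  -- u belongs to all four edges
  obtain ⟨a₁, he1⟩ := Sym2.mem_iff_exists.mp hu1
  obtain ⟨a₂, he2⟩ := Sym2.mem_iff_exists.mp hu2
  obtain ⟨a₃, he3⟩ := Sym2.mem_iff_exists.mp hv3
  obtain ⟨a₄, he4⟩ := Sym2.mem_iff_exists.mp hu4
  have adj : ∀ (e : H.edgeSet) (a : W), (e : Sym2 W) = s(u, a) → H.Adj u a := by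
    intro e a he
    have := e.2; rwa [he, mem_edgeSet] at this
  have key : ∀ (e f : H.edgeSet) (a b : W), (e : Sym2 W) = s(u, a) → (f : Sym2 W) = s(u, b) →
      H.lineGraph.Adj e f → a ≠ b := by
    rintro e f a b hea hfb hadj rfl
    exact hadj.ne (Subtype.ext (hea.trans hfb.symm))
  have h1 : ({a₁, a₂, a₃, a₄} : Set W) ⊆ H.neighborSet u := by
    rintro x (rfl | rfl | rfl | rfl)
    · exact adj _ _ he1
    · exact adj _ _ he2
    · exact adj _ _ he3
    · exact adj _ _ he4
  have hc : ({a₁, a₂, a₃, a₄} : Set W).ncard = 4 := by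
    rw [Set.ncard_insert_of_notMem (by
        simp only [Set.mem_insert_iff, Set.mem_singleton_iff]
        push_neg
        exact ⟨key _ _ _ _ he1 he2 h12, key _ _ _ _ he1 he3 h13, key _ _ _ _ he1 he4 h14⟩),
      Set.ncard_insert_of_notMem (by
        simp only [Set.mem_insert_iff, Set.mem_singleton_iff]
        push_neg
        exact ⟨key _ _ _ _ he2 he3 h23, key _ _ _ _ he2 he4 h24⟩),
      Set.ncard_insert_of_notMem (by
        simp only [Set.mem_singleton_iff]
        exact key _ _ _ _ he3 he4 h34),
      Set.ncard_singleton]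
  have := Set.ncard_le_ncard h1 (Set.toFinite _)
  rw [hc] at this
  have := hdeg u
  omega

lemma dAdj01 : diamond.Adj 0 1 := by
  rw [diamond, SimpleGraph.fromEdgeSet_adj]; simp
lemma dAdj02 : diamond.Adj 0 2 := by
  rw [diamond, SimpleGraph.fromEdgeSet_adj]; simp
lemma dAdj12 : diamond.Adj 1 2 := by
  rw [diamond, SimpleGraph.fromEdgeSet_adj]; simp
lemma dAdj03 : diamond.Adj 0 3 := by
  rw [diamond, SimpleGraph.fromEdgeSet_adj]; simp
lemma dAdj13 : diamond.Adj 1 3 := by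
  rw [diamond, SimpleGraph.fromEdgeSet_adj]; simp
lemma dNAdj23 : ¬diamond.Adj 2 3 := by
  rw [diamond, SimpleGraph.fromEdgeSet_adj]
  simp [Sym2.eq, Sym2.rel_iff', Fin.ext_iff]

lemma backward {W : Type} [Fintype W] {H : SimpleGraph W} (h3 : H.CliqueFree 3)
    (hdeg : ∀ w : W, (H.neighborSet w).ncard ≤ 3) (ψ : G ≃g H.lineGraph) :
    G.CliqueFree 4 ∧ IsEmpty (claw ↪g G) ∧ IsEmpty (diamond ↪g G) := by
  refine ⟨?_, ⟨fun f => ?_⟩, ⟨fun f => ?_⟩⟩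
  · rw [cliqueFree_iff]
    refine ⟨fun f => ?_⟩
    set g : (⊤ : SimpleGraph (Fin 4)) ↪g H.lineGraph := ψ.toEmbedding.comp f.topEmbedding with hg
    have adj : ∀ i j : Fin 4, i ≠ j → H.lineGraph.Adj (g i) (g j) := fun i j hij =>
      g.map_rel_iff.mpr hij
    exact lineK4 h3 hdeg (adj 0 1 (by decide)) (adj 0 2 (by decide)) (adj 0 3 (by decide))
      (adj 1 2 (by decide)) (adj 1 3 (by decide)) (adj 2 3 (by decide))
  · -- claw
    set g : claw ↪g H.lineGraph := ψ.toEmbedding.comp f with hg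
    set e₀ := g (Sum.inl 0) with he₀
    set e₁ := g (Sum.inr 0) with he₁
    set e₂ := g (Sum.inr 1) with he₂
    set e₃ := g (Sum.inr 2) with he₃
    have adj : ∀ i : Fin 3, H.lineGraph.Adj e₀ (g (Sum.inr i)) := fun i =>
      g.map_rel_iff.mpr (by constructor <;> simp)
    have share : ∀ i j : Fin 3, i ≠ j → ∀ x : W,
        x ∈ (g (Sum.inr i) : Sym2 W) → x ∈ (g (Sum.inr j) : Sym2 W) → False := by
      intro i j hij x hxi hxj
      have hne : g (Sum.inr i) ≠ g (Sum.inr j) := g.injective.ne (by simp [hij])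
      have : H.lineGraph.Adj (g (Sum.inr i)) (g (Sum.inr j)) :=
        lineGraph_adj_iff_exists.mpr ⟨hne, x, hxi, hxj⟩
      have := g.map_rel_iff.mp this
      simp [claw] at this
    obtain ⟨-, x, hx0, hx1⟩ := lineGraph_adj_iff_exists.mp (adj 0)
    obtain ⟨a, hea⟩ := Sym2.mem_iff_exists.mp hx0
    obtain ⟨-, y, hy0, hy2⟩ := lineGraph_adj_iff_exists.mp (adj 1)
    obtain ⟨-, z, hz0, hz3⟩ := lineGraph_adj_iff_exists.mp (adj 2)
    rw [hea, Sym2.mem_iff] at hy0 hz0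
    have hx0' : x ∈ (e₀ : Sym2 W) := hx0
    -- x, y, z each ∈ {x, a}
    rcases hy0 with rfl | rfl <;> rcases hz0 with rfl | rfl
    · exact share 0 1 (by decide) _ hx1 hy2
    · exact share 0 1 (by decide) _ hx1 hy2
    · exact share 0 2 (by decide) _ hx1 hz3
    · exact share 1 2 (by decide) _ hy2 hz3
  · -- diamond
    set g : diamond ↪g H.lineGraph := ψ.toEmbedding.comp f with hg
    have h01 := g.map_rel_iff.mpr dAdj01
    have h02 := g.map_rel_iff.mpr dAdj02
    have h12 := g.map_rel_iff.mpr dAdj12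
    have h03 := g.map_rel_iff.mpr dAdj03
    have h13 := g.map_rel_iff.mpr dAdj13
    obtain ⟨v, hv0, hv1, hv2⟩ := lineTri h3 h01 h02 h12
    obtain ⟨w, hw0, hw1, hw3⟩ := lineTri h3 h01 h03 h13
    have hvw : v = w := by
      by_contra hne
      exact h01.ne (Subtype.ext ((sym2_eq hne hv0 hw0).trans (sym2_eq hne hv1 hw1).symm))
    subst hvw
    have hne : g 2 ≠ g 3 := g.injective.ne (by decide)
    exact dNAdj23 (g.map_rel_iff.mp (lineGraph_adj_iff_exists.mpr ⟨hne, v, hv2, hw3⟩))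

abbrev MCT (G : SimpleGraph V) : Type _ := {s : Set V // MC G s}

def A (G : SimpleGraph V) : (MCT G ⊕ V) → (MCT G ⊕ V) → Prop
  | Sum.inl s, Sum.inl t => (s.1 ∩ t.1).Nonempty
  | Sum.inl s, Sum.inr v => v ∈ s.1 ∧ ∀ t : Set V, MC G t → v ∈ t → t = s.1
  | Sum.inr _, _ => False

def H0 (G : SimpleGraph V) : SimpleGraph (MCT G ⊕ V) := SimpleGraph.fromRel (A G)

lemma adj_ll {s t : MCT G} :
    (H0 G).Adj (Sum.inl s) (Sum.inl t) ↔ s ≠ t ∧ (s.1 ∩ t.1).Nonempty := by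
  rw [H0, fromRel_adj]
  rw [show A G (Sum.inl s) (Sum.inl t) = (s.1 ∩ t.1).Nonempty from rfl,
    show A G (Sum.inl t) (Sum.inl s) = (t.1 ∩ s.1).Nonempty from rfl]
  constructor
  · rintro ⟨hne, h | h⟩
    · exact ⟨fun h' => hne (by rw [h']), h⟩
    · exact ⟨fun h' => hne (by rw [h']), h.choose, h.choose_spec.2, h.choose_spec.1⟩
  · rintro ⟨hne, h⟩
    exact ⟨fun h' => hne (Sum.inl_injective h'), Or.inl h⟩

lemma adj_lr {s : MCT G} {v : V} :
    (H0 G).Adj (Sum.inl s) (Sum.inr v) ↔ v ∈ s.1 ∧ ∀ t : Set V, MC G t → v ∈ t → t = s.1 := by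
  rw [H0, fromRel_adj]
  rw [show A G (Sum.inl s) (Sum.inr v) = (v ∈ s.1 ∧ ∀ t : Set V, MC G t → v ∈ t → t = s.1)
      from rfl,
    show A G (Sum.inr v) (Sum.inl s) = False from rfl]
  constructor
  · rintro ⟨-, h | h⟩
    · exact h
    · exact h.elim
  · rintro h
    exact ⟨by simp, Or.inl h⟩

lemma adj_rr {u v : V} : ¬(H0 G).Adj (Sum.inr u) (Sum.inr v) := by
  rw [H0, fromRel_adj]
  rw [show A G (Sum.inr u) (Sum.inr v) = False from rfl,
    show A G (Sum.inr v) (Sum.inr u) = False from rfl]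
  rintro ⟨-, h | h⟩ <;> exact h

lemma forward [Fintype V] (h4 : G.CliqueFree 4) (hcl : IsEmpty (claw ↪g G))
    (hd : IsEmpty (diamond ↪g G)) :
    ∃ (W : Type) (_ : Fintype W) (H : SimpleGraph W), H.CliqueFree 3 ∧
      (∀ w : W, (H.neighborSet w).ncard ≤ 3) ∧ Nonempty (G ≃g H.lineGraph) := by
  classical
  have hex : ∀ v : V, ∃ s : Set V, ({v} : Set V) ⊆ s ∧ MC G s := fun v =>
    exists_mc (G.isClique_singleton v)
  choose cl hclsub hclMC using hex
  have hclmem : ∀ v : V, v ∈ cl v := fun v => hclsub v rfl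
  -- construct the candidate edge for each vertex
  have hφ : ∀ v : V, ∃ e : (H0 G).edgeSet,
      (∀ x, x ∈ (e : Sym2 (MCT G ⊕ V)) →
        (∃ s : MCT G, x = Sum.inl s ∧ v ∈ s.1) ∨ x = Sum.inr v) ∧
      (∀ s : MCT G, v ∈ s.1 → Sum.inl s ∈ (e : Sym2 (MCT G ⊕ V))) := by
    intro v
    by_cases h : ∃ t : Set V, MC G t ∧ v ∈ t ∧ t ≠ cl v
    · obtain ⟨t, htMC, hvt, hne⟩ := h
      have hadj : (H0 G).Adj (Sum.inl ⟨cl v, hclMC v⟩) (Sum.inl ⟨t, htMC⟩) :=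
        adj_ll.mpr ⟨fun h' => hne (congrArg Subtype.val h').symm, v, hclmem v, hvt⟩
      refine ⟨⟨s(Sum.inl ⟨cl v, hclMC v⟩, Sum.inl ⟨t, htMC⟩), hadj⟩, ?_, ?_⟩
      · intro x hx
        rw [Sym2.mem_iff] at hx
        rcases hx with rfl | rfl
        · exact Or.inl ⟨_, rfl, hclmem v⟩
        · exact Or.inl ⟨_, rfl, hvt⟩
      · intro s' hs'
        have key : s' = ⟨cl v, hclMC v⟩ ∨ s' = ⟨t, htMC⟩ := by
          by_contra hk
          push_neg at hk
          exact mc_two h4 hcl hd s'.2 (hclMC v) htMC hs' (hclmem v) hvt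
            (fun h' => hk.1 (Subtype.ext h')) (fun h' => hk.2 (Subtype.ext h'))
            (fun h' => hne h'.symm)
        rw [Sym2.mem_iff]
        rcases key with h' | h'
        · exact Or.inl (by rw [h'])
        · exact Or.inr (by rw [h'])
    · push_neg at h
      have huniq : ∀ t : Set V, MC G t → v ∈ t → t = cl v := fun t ht hvt => h t ht hvt
      have hadj : (H0 G).Adj (Sum.inl ⟨cl v, hclMC v⟩) (Sum.inr v) :=
        adj_lr.mpr ⟨hclmem v, huniq⟩
      refine ⟨⟨s(Sum.inl ⟨cl v, hclMC v⟩, Sum.inr v), hadj⟩, ?_, ?_⟩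
      · intro x hx
        rw [Sym2.mem_iff] at hx
        rcases hx with rfl | rfl
        · exact Or.inl ⟨_, rfl, hclmem v⟩
        · exact Or.inr rfl
      · intro s' hs'
        have : s' = ⟨cl v, hclMC v⟩ := Subtype.ext (huniq s'.1 s'.2 hs')
        rw [Sym2.mem_iff]
        exact Or.inl (by rw [this])
  choose φ hP1 hP2 using hφ
  have hinj : Function.Injective φ := by
    intro u v huv
    by_contra hne
    have hall : ∀ x, x ∈ (φ u : Sym2 (MCT G ⊕ V)) →
        ∃ s : MCT G, x = Sum.inl s ∧ u ∈ s.1 ∧ v ∈ s.1 := by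
      intro x hx
      have hx' : x ∈ (φ v : Sym2 (MCT G ⊕ V)) := by rw [← huv]; exact hx
      rcases hP1 u x hx with ⟨s, rfl, hus⟩ | rfl
      · rcases hP1 v _ hx' with ⟨s', heq, hvs⟩ | heq
        · rcases Sum.inl_injective heq with rfl
          exact ⟨s, rfl, hus, hvs⟩
        · exact absurd heq (by simp)
      · rcases hP1 v _ hx' with ⟨s', heq, hvs⟩ | heq
        · exact absurd heq (by simp)
        · exact absurd (Sum.inr_injective heq) hne
    obtain ⟨a, b, hab⟩ : ∃ a b, (φ u : Sym2 (MCT G ⊕ V)) = s(a, b) :=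
      Sym2.ind (fun x y => ⟨x, y, rfl⟩) (φ u : Sym2 (MCT G ⊕ V))
    obtain ⟨s, rfl, hus, hvs⟩ := hall a (by rw [hab]; exact Sym2.mem_mk_left a b)
    obtain ⟨t, rfl, hut, hvt⟩ := hall b (by rw [hab]; exact Sym2.mem_mk_right _ b)
    have hadj : (H0 G).Adj (Sum.inl s) (Sum.inl t) := by
      have := (φ u).2
      rwa [hab, mem_edgeSet] at this
    have hst := (adj_ll.mp hadj).1
    exact hst (Subtype.ext (mc_unique_edge hd s.2 t.2 hus hvs hut hvt hne).symm)
  have hmap : ∀ u v : V, (H0 G).lineGraph.Adj (φ u) (φ v) ↔ G.Adj u v := by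
    intro u v
    constructor
    · intro h
      obtain ⟨hne, x, hxu, hxv⟩ := lineGraph_adj_iff_exists.mp h
      have hne' : u ≠ v := fun h' => hne (by rw [h'])
      rcases hP1 u x hxu with ⟨s, rfl, hus⟩ | rfl
      · rcases hP1 v _ hxv with ⟨s', heq, hvs⟩ | heq
        · rcases Sum.inl_injective heq with rfl
          exact s.2.1 hus hvs hne'
        · exact absurd heq (by simp)
      · rcases hP1 v _ hxv with ⟨s', heq, hvs⟩ | heq
        · exact absurd heq (by simp)
        · exact absurd (Sum.inr_injective heq) hne'
    · intro h
      obtain ⟨s, hsub, hsMC⟩ := exists_mc (isClique_pair.mpr (fun _ => h))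
      have h1 := hP2 u ⟨s, hsMC⟩ (hsub (by simp))
      have h2 := hP2 v ⟨s, hsMC⟩ (hsub (by simp))
      exact lineGraph_adj_iff_exists.mpr ⟨fun h' => h.ne (hinj h'), _, h1, h2⟩
  have hsurj : Function.Surjective φ := by
    rintro ⟨e, he⟩
    obtain ⟨a, b, rfl⟩ : ∃ a b, e = s(a, b) := Sym2.ind (fun x y => ⟨x, y, rfl⟩) e
    rw [mem_edgeSet] at he
    rcases a with s | va <;> rcases b with t | vb
    · obtain ⟨hst, v, hvs, hvt⟩ := adj_ll.mp he
      refine ⟨v, Subtype.ext ?_⟩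
      exact sym2_eq (fun h' => hst (Sum.inl_injective h')) (hP2 v s hvs) (hP2 v t hvt)
    · obtain ⟨hvs, huniq⟩ := adj_lr.mp he
      refine ⟨vb, Subtype.ext ?_⟩
      have m1 := hP2 vb s hvs
      obtain ⟨y, hy⟩ := Sym2.mem_iff_exists.mp m1
      have hym : y ∈ (φ vb : Sym2 (MCT G ⊕ V)) := by rw [hy]; exact Sym2.mem_mk_right _ y
      rcases hP1 vb y hym with ⟨t, rfl, hvt⟩ | rfl
      · rcases Subtype.ext (huniq t.1 t.2 hvt) with rfl
        have := (φ vb).2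
        rw [hy, mem_edgeSet] at this
        exact absurd this ((H0 G).irrefl)
      · exact hy
    · obtain ⟨hvs, huniq⟩ := adj_lr.mp he.symm
      refine ⟨va, Subtype.ext ?_⟩
      have m1 := hP2 va t hvs
      obtain ⟨y, hy⟩ := Sym2.mem_iff_exists.mp m1
      have hym : y ∈ (φ va : Sym2 (MCT G ⊕ V)) := by rw [hy]; exact Sym2.mem_mk_right _ y
      rcases hP1 va y hym with ⟨t', rfl, hvt⟩ | rfl
      · rcases Subtype.ext (huniq t'.1 t'.2 hvt) with rfl
        have := (φ va).2
        rw [hy, mem_edgeSet] at this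
        exact absurd this ((H0 G).irrefl)
      · rw [hy, Sym2.eq_swap]
    · exact absurd he adj_rr
  -- the base isomorphism
  let iso0 : G ≃g (H0 G).lineGraph :=
    ⟨Equiv.ofBijective φ ⟨hinj, hsurj⟩, fun {a b} => hmap a b⟩
  -- vertex in three max cliques is impossible, subtype version
  have mc_two' : ∀ (s t r : MCT G) (v : V), v ∈ s.1 → v ∈ t.1 → v ∈ r.1 →
      s ≠ t → s ≠ r → t ≠ r → False := by
    intro s t r v hs ht hr hst hsr htr
    exact mc_two h4 hcl hd s.2 t.2 r.2 hs ht hr (fun h' => hst (Subtype.ext h'))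
      (fun h' => hsr (Subtype.ext h')) (fun h' => htr (Subtype.ext h'))
  -- triangle-freeness of H0
  have h3 : (H0 G).CliqueFree 3 := by
    rw [cliqueFree_iff]
    refine ⟨fun f => ?_⟩
    have hadj : ∀ i j : Fin 3, i ≠ j → (H0 G).Adj (f i) (f j) := fun i j hij =>
      f.topEmbedding.map_rel_iff.mpr hij
    have notri : ∀ a b c : MCT G ⊕ V, (H0 G).Adj a b → (H0 G).Adj a c →
        (H0 G).Adj b c → False := by
      rintro (s | u) (t | u) (r | w) hab hac hbc
      · -- all inl
        obtain ⟨hst, u, hus, hut⟩ := adj_ll.mp hab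
        obtain ⟨hsr, w, hws, hwr⟩ := adj_ll.mp hac
        obtain ⟨htr, x, hxt, hxr⟩ := adj_ll.mp hbc
        have huw : u ≠ w := by
          rintro rfl
          exact mc_two' s t r u hus hut hwr hst hsr htr
        have hux : u ≠ x := by
          rintro rfl
          exact mc_two' s t r u hus hut hxr hst hsr htr
        have hwx : w ≠ x := by
          rintro rfl
          exact mc_two' s t r w hws hxt hwr hst hsr htr
        have auw : G.Adj u w := s.2.1 hus hws huw
        have aux : G.Adj u x := t.2.1 hut hxt hux
        have awx : G.Adj w x := r.2.1 hwr hxr hwx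
        have hcliq : G.IsClique {u, w, x} := by
          intro p hp q hq hpq
          simp only [Set.mem_insert_iff, Set.mem_singleton_iff] at hp hq
          rcases hp with rfl | rfl | rfl <;> rcases hq with rfl | rfl | rfl <;>
            first
              | exact absurd rfl hpq
              | assumption
              | exact auw.symm | exact aux.symm | exact awx.symm
        obtain ⟨c, hcsub, hcMC⟩ := exists_mc hcliq
        have e1 : c = s.1 := mc_unique_edge hd s.2 hcMC hus hws
          (hcsub (by simp)) (hcsub (by simp)) huw
        have e2 : c = t.1 := mc_unique_edge hd t.2 hcMC hut hxt
          (hcsub (by simp)) (hcsub (by simp)) hux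
        exact hst (Subtype.ext (e1.symm.trans e2))
      · -- inl s, inl t, inr w
        obtain ⟨hws, huniq⟩ := adj_lr.mp hac
        obtain ⟨hwt, -⟩ := adj_lr.mp hbc
        exact (adj_ll.mp hab).1 (Subtype.ext (huniq t.1 t.2 hwt).symm)
      · -- inl s, inr u, inl r
        obtain ⟨hus, huniq⟩ := adj_lr.mp hab
        obtain ⟨hur, -⟩ := adj_lr.mp hbc.symm
        exact (adj_ll.mp hac).1 (Subtype.ext (huniq r.1 r.2 hur).symm)
      · exact adj_rr hbc
      · -- inr u, inl t, inl r
        obtain ⟨hut, huniq⟩ := adj_lr.mp hab.symm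
        obtain ⟨hur, -⟩ := adj_lr.mp hac.symm
        exact (adj_ll.mp hbc).1 (Subtype.ext (huniq r.1 r.2 hur).symm)
      · exact adj_rr hac
      · exact adj_rr hab
      · exact adj_rr hab
    exact notri (f 0) (f 1) (f 2) (hadj 0 1 (by decide)) (hadj 0 2 (by decide))
      (hadj 1 2 (by decide))
  -- degree bound for H0
  have hdeg0 : ∀ w : MCT G ⊕ V, ((H0 G).neighborSet w).ncard ≤ 3 := by
    rintro (s | v)
    · by_cases hV : Nonempty V
      · have hch : ∀ x : MCT G ⊕ V, ∃ u : V, x ∈ (H0 G).neighborSet (Sum.inl s) →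
            u ∈ s.1 ∧ (x = Sum.inr u ∨ ∃ t : MCT G, x = Sum.inl t ∧ u ∈ t.1) := by
          rintro (t | u)
          · by_cases hx : (H0 G).Adj (Sum.inl s) (Sum.inl t)
            · obtain ⟨hst, u, hus, hut⟩ := adj_ll.mp hx
              exact ⟨u, fun _ => ⟨hus, Or.inr ⟨t, rfl, hut⟩⟩⟩
            · exact ⟨Classical.arbitrary V, fun hx' => absurd hx' hx⟩
          · refine ⟨u, fun hx => ?_⟩
            have := adj_lr.mp hx
            exact ⟨this.1, Or.inl rfl⟩
        choose fc hfc using hch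
        have hmapsto : ∀ x ∈ (H0 G).neighborSet (Sum.inl s), fc x ∈ s.1 := fun x hx =>
          (hfc x hx).1
        have hinjOn : Set.InjOn fc ((H0 G).neighborSet (Sum.inl s)) := by
          intro x hx y hy hxy
          obtain ⟨hx1, hx2⟩ := hfc x hx
          obtain ⟨hy1, hy2⟩ := hfc y hy
          rcases hx2 with hx2 | ⟨t, hxt, ht⟩ <;> rcases hy2 with hy2 | ⟨t', hyt, ht'⟩
          · rw [hx2, hy2, hxy]
          · have hx' := hx
            rw [hx2] at hx'
            obtain ⟨-, huniq⟩ := adj_lr.mp hx'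
            have hy' := hy
            rw [hyt] at hy'
            exact absurd (Subtype.ext (huniq t'.1 t'.2 (hxy ▸ ht')) : t' = s).symm
              (adj_ll.mp hy').1
          · have hy' := hy
            rw [hy2] at hy'
            obtain ⟨-, huniq⟩ := adj_lr.mp hy'
            have hx' := hx
            rw [hxt] at hx'
            exact absurd (Subtype.ext (huniq t.1 t.2 (hxy ▸ ht)) : t = s).symm
              (adj_ll.mp hx').1
          · have hx' := hx
            rw [hxt] at hx'
            have hy' := hy
            rw [hyt] at hy'
            by_cases htt : t = t'
            · rw [hxt, hyt, htt]
            · exact (mc_two' s t t' (fc x) hx1 ht (hxy ▸ ht')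
                (adj_ll.mp hx').1 (adj_ll.mp hy').1 htt).elim
        calc ((H0 G).neighborSet (Sum.inl s)).ncard ≤ s.1.ncard :=
              Set.ncard_le_ncard_of_injOn fc hmapsto hinjOn (Set.toFinite _)
          _ ≤ 3 := mc_card h4 (Set.toFinite _) s.2
      · have : (H0 G).neighborSet (Sum.inl s) = ∅ := by
          ext x
          simp only [Set.mem_empty_iff_false, iff_false, mem_neighborSet]
          rcases x with t | u
          · intro hx
            obtain ⟨-, u, -⟩ := adj_ll.mp hx
            exact hV ⟨u⟩
          · exact fun _ => hV ⟨u⟩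
        rw [this]
        simp
    · have hss : ((H0 G).neighborSet (Sum.inr v)).Subsingleton := by
        rintro (s | u) hx (t | w) hy
        · obtain ⟨hvs, huniq⟩ := adj_lr.mp hx.symm
          obtain ⟨hvt, -⟩ := adj_lr.mp hy.symm
          exact congrArg Sum.inl (Subtype.ext (huniq t.1 t.2 hvt)).symm
        · exact absurd hy adj_rr
        · exact absurd hx adj_rr
        · exact absurd hx adj_rr
      have := (Set.ncard_le_one_iff (Set.toFinite _)).mpr (fun ha hb => hss ha hb)
      omega
  -- transport to a graph on `Fin n`
  let n := Nat.card (MCT G ⊕ V)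
  let E : (MCT G ⊕ V) ≃ Fin n := Finite.equivFin _
  let H : SimpleGraph (Fin n) := SimpleGraph.comap E.symm (H0 G)
  have iso1 : (H0 G) ≃g H := ⟨E, by intro a b; simp [H, comap_adj]⟩
  refine ⟨Fin n, inferInstance, H, CliqueFree.comap iso1.symm.toEmbedding.isContained h3, ?_,
    ⟨iso0.trans (lineGraphIso iso1)⟩⟩
  intro w
  have : H.neighborSet w = E '' ((H0 G).neighborSet (E.symm w)) := by
    ext u
    simp only [mem_neighborSet, Set.mem_image]
    constructor
    · intro hu
      exact ⟨E.symm u, hu, by simp⟩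
    · rintro ⟨x, hx, rfl⟩
      simpa [H, comap_adj] using hx
  rw [this, Set.ncard_image_of_injective _ E.injective]
  exact hdeg0 _

end Stmt9

/-- A graph is `(K₄, claw, diamond)`-free iff it is the line graph of a triangle-free
graph of maximum degree at most 3. -/
theorem stmt9 {V : Type*} [Fintype V] (G : SimpleGraph V) :
    (G.CliqueFree 4 ∧ IsEmpty (claw ↪g G) ∧ IsEmpty (diamond ↪g G)) ↔
      ∃ (W : Type) (_ : Fintype W) (H : SimpleGraph W), H.CliqueFree 3 ∧
        (∀ w : W, (H.neighborSet w).ncard ≤ 3) ∧ Nonempty (G ≃g H.lineGraph) := by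
  constructor
  · rintro ⟨h4, hcl, hd⟩
    exact Stmt9.forward h4 hcl hd
  · rintro ⟨W, fW, H, h3, hdeg, ⟨ψ⟩⟩
    exact Stmt9.backward h3 hdeg ψ
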